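/- arXiv:0805.0639 — 7 statements merged into one kernel-verified Lean document; each statement's English description precedes it below -/
import Mathlib

section
/- Let J be a symmetric 3×3 real matrix and let J_d = (1/2)tr(J)·I − J. Then for all vectors x, y ∈ ℝ³, x × (J_d y) + J_d (x × y) = (J x) × y; equivalently, as matrices, S_x J_d + J_d S_x = S_{Jx}. -/
open Matrix

/-- The hat map: `hat x` is the skew-symmetric matrix with `(hat x) *ᵥ y = x ×₃ y`. -/
def hat (x : Fin 3 → ℝ) : Matrix (Fin 3) (Fin 3) ℝ :=
  !![0, -x 2, x 1; x 2, 0, -x 0; -x 1, x 0, 0]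

/-- For a symmetric `J` and `J_d = (1/2)tr(J)·I − J`, one has
`x × (J_d y) + J_d (x × y) = (J x) × y` for all `x y`, and as matrices
`S_x J_d + J_d S_x = S_{Jx}`. -/
theorem hat_Jd_identity (J : Matrix (Fin 3) (Fin 3) ℝ) (hJ : Jᵀ = J)
    (Jd : Matrix (Fin 3) (Fin 3) ℝ) (hJd : Jd = (((1 : ℝ) / 2) * J.trace) • (1 : Matrix (Fin 3) (Fin 3) ℝ) - J) :
    (∀ x y : Fin 3 → ℝ,
      x ⨯₃ (Jd *ᵥ y) + Jd *ᵥ (x ⨯₃ y) = (J *ᵥ x) ⨯₃ y) ∧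
    (∀ x : Fin 3 → ℝ, hat x * Jd + Jd * hat x = hat (J *ᵥ x)) := by
  subst hJd
  have h01 : J 0 1 = J 1 0 := by conv_lhs => rw [← hJ, transpose_apply]
  have h02 : J 0 2 = J 2 0 := by conv_lhs => rw [← hJ, transpose_apply]
  have h12 : J 1 2 = J 2 1 := by conv_lhs => rw [← hJ, transpose_apply]
  constructor
  · intro x y
    funext i
    fin_cases i <;>
      simp [crossProduct, mulVec, dotProduct, Matrix.trace, Matrix.diag,
        Fin.sum_univ_three, Matrix.one_apply, h01, h02, h12] <;> ring
  · intro x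
    ext i j
    fin_cases i <;> fin_cases j <;>
      simp [hat, crossProduct, Matrix.mul_apply, mulVec, vecMul, dotProduct, Matrix.sub_apply, Matrix.smul_apply, Matrix.one_apply, Matrix.trace,
        Matrix.diag, Fin.sum_univ_three, Matrix.one_apply, h01, h02, h12] <;> ring
end

section
/- Let J be a symmetric 3×3 real matrix, J_d = (1/2)tr(J)·I − J, and fix Ω ∈ ℝ³. Then the function h ↦ tr((I − exp(h·S_Ω)) J_d) − (h²/2)·ΩᵀJΩ is O(h⁴) as h → 0, where exp denotes the matrix exponential. In particular, the discrete kinetic energy term (1/h)tr((I − exp(h S_Ω))J_d) approximates h·(1/2)ΩᵀJΩ with a fourth-order error. -/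
open Matrix Asymptotics

section computeAux

variable (J : Matrix (Fin 3) (Fin 3) ℝ) (Ω : Fin 3 → ℝ)

lemma hat_t1 (hJ : Jᵀ = J) :
    (hat Ω * ((((1 : ℝ) / 2) * J.trace) • (1 : Matrix (Fin 3) (Fin 3) ℝ) - J)).trace = 0 := by
  have h01 : J 1 0 = J 0 1 := by conv_lhs => rw [← Matrix.transpose_apply J 0 1, hJ]
  have h02 : J 2 0 = J 0 2 := by conv_lhs => rw [← Matrix.transpose_apply J 0 2, hJ]
  have h12 : J 2 1 = J 1 2 := by conv_lhs => rw [← Matrix.transpose_apply J 1 2, hJ]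
  simp [hat, Matrix.trace_fin_three, Matrix.mul_apply, Fin.sum_univ_three, Matrix.one_apply,
    Matrix.sub_apply, Matrix.smul_apply, Matrix.vecMul, dotProduct, h01, h02, h12]
  ring

lemma hat_t2 (hJ : Jᵀ = J) :
    (hat Ω * hat Ω * ((((1 : ℝ) / 2) * J.trace) • (1 : Matrix (Fin 3) (Fin 3) ℝ) - J)).trace
      = -(Ω ⬝ᵥ (J *ᵥ Ω)) := by
  have h01 : J 1 0 = J 0 1 := by conv_lhs => rw [← Matrix.transpose_apply J 0 1, hJ]
  have h02 : J 2 0 = J 0 2 := by conv_lhs => rw [← Matrix.transpose_apply J 0 2, hJ]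
  have h12 : J 2 1 = J 1 2 := by conv_lhs => rw [← Matrix.transpose_apply J 1 2, hJ]
  simp [hat, Matrix.trace_fin_three, Matrix.mul_apply, Fin.sum_univ_three, Matrix.one_apply,
    Matrix.sub_apply, Matrix.smul_apply, Matrix.vecMul, dotProduct, Matrix.mulVec,
    h01, h02, h12]
  ring

lemma hat_t3 (hJ : Jᵀ = J) :
    (hat Ω * hat Ω * hat Ω *
      ((((1 : ℝ) / 2) * J.trace) • (1 : Matrix (Fin 3) (Fin 3) ℝ) - J)).trace = 0 := by
  have h01 : J 1 0 = J 0 1 := by conv_lhs => rw [← Matrix.transpose_apply J 0 1, hJ]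
  have h02 : J 2 0 = J 0 2 := by conv_lhs => rw [← Matrix.transpose_apply J 0 2, hJ]
  have h12 : J 2 1 = J 1 2 := by conv_lhs => rw [← Matrix.transpose_apply J 1 2, hJ]
  simp [hat, Matrix.trace_fin_three, Matrix.mul_apply, Fin.sum_univ_three, Matrix.one_apply,
    Matrix.sub_apply, Matrix.smul_apply, Matrix.vecMul, dotProduct, h01, h02, h12]
  ring

end computeAux

attribute [local instance] Matrix.linftyOpNormedAddCommGroup Matrix.linftyOpNormedRing
  Matrix.linftyOpNormedAlgebra

/-- With `J` symmetric, `J_d = (1/2)tr(J)·I − J`, and `Ω ∈ ℝ³` fixed, the map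
`h ↦ tr((I − exp(h·S_Ω)) J_d) − (h²/2)·ΩᵀJΩ` is `O(h⁴)` as `h → 0`. -/
theorem trace_exp_hat_Jd_isBigO (J : Matrix (Fin 3) (Fin 3) ℝ) (hJ : Jᵀ = J)
    (Jd : Matrix (Fin 3) (Fin 3) ℝ)
    (hJd : Jd = (((1 : ℝ) / 2) * J.trace) • (1 : Matrix (Fin 3) (Fin 3) ℝ) - J)
    (Ω : Fin 3 → ℝ) :
    (fun h : ℝ =>
        ((1 - NormedSpace.exp (h • hat Ω)) * Jd).trace - h ^ 2 / 2 * (Ω ⬝ᵥ (J *ᵥ Ω)))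
      =O[nhds 0] fun h : ℝ => h ^ 4 := by
  have hexp : HasFPowerSeriesAt (NormedSpace.exp)
      (NormedSpace.expSeries ℝ (Matrix (Fin 3) (Fin 3) ℝ)) 0 :=
    NormedSpace.exp_hasFPowerSeriesAt_zero
  have key := hexp.isBigO_sub_partialSum_pow 4
  have tend : Filter.Tendsto (fun h : ℝ => h • hat Ω) (nhds 0) (nhds 0) := by
    have : Filter.Tendsto (fun h : ℝ => h • hat Ω) (nhds 0) (nhds ((0 : ℝ) • hat Ω)) :=
      (continuous_id.smul continuous_const).tendsto 0
    simpa using this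
  have key2 := key.comp_tendsto tend
  let L : Matrix (Fin 3) (Fin 3) ℝ →L[ℝ] ℝ :=
    LinearMap.toContinuousLinearMap
      ((Matrix.traceLinearMap (Fin 3) ℝ ℝ).comp (LinearMap.mulRight ℝ Jd))
  have key3 := (L.isBigO_comp
    (fun h : ℝ => NormedSpace.exp (0 + h • hat Ω)
      - (NormedSpace.expSeries ℝ (Matrix (Fin 3) (Fin 3) ℝ)).partialSum 4 (h • hat Ω))
    (nhds 0)).trans key2
  have hb : (fun h : ℝ => ‖h • hat Ω‖ ^ 4) =O[nhds 0] fun h : ℝ => h ^ 4 := by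
    refine IsBigO.of_bound (‖hat Ω‖ ^ 4) ?_
    filter_upwards with h
    have heq : ‖h • hat Ω‖ ^ 4 = ‖hat Ω‖ ^ 4 * |h| ^ 4 := by
      rw [norm_smul, Real.norm_eq_abs, mul_pow]; ring
    simp only [Real.norm_eq_abs, abs_pow, abs_abs,
      abs_of_nonneg (pow_nonneg (norm_nonneg _) 4)]
    exact le_of_eq heq
  have key4 := (key3.trans hb).neg_left
  refine key4.congr' ?_ Filter.EventuallyEq.rfl
  filter_upwards with h
  have hps : (NormedSpace.expSeries ℝ (Matrix (Fin 3) (Fin 3) ℝ)).partialSum 4 (h • hat Ω)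
      = 1 + h • hat Ω + (h ^ 2 / 2) • (hat Ω * hat Ω)
        + (h ^ 3 / 6) • (hat Ω * hat Ω * hat Ω) := by
    simp only [FormalMultilinearSeries.partialSum, Finset.sum_range_succ,
      Finset.range_zero, Finset.sum_empty, NormedSpace.expSeries_apply_eq, smul_pow,
      smul_smul, pow_zero, pow_one, pow_succ, pow_two]
    norm_num [Nat.factorial]
    module
  have hL : ∀ M : Matrix (Fin 3) (Fin 3) ℝ, L M = (M * Jd).trace := fun M => rfl
  change -((NormedSpace.exp (0 + h • hat Ω) - (NormedSpace.expSeries ℝ (Matrix (Fin 3) (Fin 3) ℝ)).partialSum 4 (h • hat Ω)) * Jd).trace = _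
  rw [hps]
  have e1 := hat_t1 J Ω hJ
  have e2 := hat_t2 J Ω hJ
  have e3 := hat_t3 J Ω hJ
  rw [← hJd] at e1 e2 e3
  simp only [zero_add, sub_mul, add_mul, one_mul, smul_mul_assoc, Matrix.trace_sub,
    Matrix.trace_add, Matrix.trace_smul, e1, e2, e3, smul_eq_mul]
  ring
end

section
/- Let U : ℝ^{3×3} × ℝ³ → ℝ be differentiable and invariant under simultaneous rotations, i.e., U(QA, Qx) = U(A, x) for all Q ∈ SO(3), all A ∈ ℝ^{3×3} and x ∈ ℝ³. For a point (A, x), let G(A,x) ∈ ℝ^{3×3} denote the matrix of partial derivatives of U with respect to the entries of A (so the derivative of U at (A,x) in the direction (H, 0) equals Σ_{ij} G(A,x)_{ij} H_{ij}), and let g(A,x) ∈ ℝ³ be the gradient of U with respect to x. Then for every R ∈ SO(3) and x ∈ ℝ³, the matrix G(R,x)ᵀR − RᵀG(R,x) is skew-symmetric, and the vector M(R,x) ∈ ℝ³ defined by S_{M(R,x)} = G(R,x)ᵀR − RᵀG(R,x) satisfies R·M(R,x) = x × g(R,x). -/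
open Matrix

attribute [local instance] Matrix.normedAddCommGroup Matrix.normedSpace

lemma hat_mulVec (v w : Fin 3 → ℝ) : hat v *ᵥ w = v ⨯₃ w := by
  ext i
  fin_cases i <;> simp [hat, cross_apply, mulVec, dotProduct, Fin.sum_univ_three] <;> ring

lemma cross_right_cancel {a b : Fin 3 → ℝ} (h : ∀ w, a ⨯₃ w = b ⨯₃ w) : a = b := by
  funext i
  fin_cases i
  · simpa [cross_apply] using congrFun (h ![0,1,0]) 2
  · simpa [cross_apply] using congrFun (h ![1,0,0]) 2
  · simpa [cross_apply] using congrFun (h ![1,0,0]) 1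

lemma orth_dot {R : Matrix (Fin 3) (Fin 3) ℝ} (hR : Rᵀ * R = 1) (u v : Fin 3 → ℝ) :
    (R *ᵥ u) ⬝ᵥ (R *ᵥ v) = u ⬝ᵥ v := by
  rw [Matrix.dotProduct_mulVec, ← Matrix.mulVec_transpose, Matrix.mulVec_mulVec, hR,
    Matrix.one_mulVec]

lemma so3_cross {R : Matrix (Fin 3) (Fin 3) ℝ} (hR : Rᵀ * R = 1) (hdet : R.det = 1)
    (a b : Fin 3 → ℝ) : (R *ᵥ a) ⨯₃ (R *ᵥ b) = R *ᵥ (a ⨯₃ b) := by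
  have hRRt : R * Rᵀ = 1 := mul_eq_one_comm.mp hR
  have key : ∀ w, ((R *ᵥ a) ⨯₃ (R *ᵥ b)) ⬝ᵥ w = (R *ᵥ (a ⨯₃ b)) ⬝ᵥ w := by
    intro w
    have hw : R *ᵥ (Rᵀ *ᵥ w) = w := by rw [Matrix.mulVec_mulVec, hRRt, Matrix.one_mulVec]
    set c := Rᵀ *ᵥ w with hc
    rw [← hw]
    have hmat : (![R *ᵥ c, R *ᵥ a, R *ᵥ b] : Matrix (Fin 3) (Fin 3) ℝ)
        = Matrix.of ![c, a, b] * Rᵀ := by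
      ext i j
      fin_cases i <;> simp [Matrix.mul_apply, Matrix.mulVec, dotProduct,
        Fin.sum_univ_three, mul_comm]
    calc ((R *ᵥ a) ⨯₃ (R *ᵥ b)) ⬝ᵥ (R *ᵥ c)
        = (R *ᵥ c) ⬝ᵥ ((R *ᵥ a) ⨯₃ (R *ᵥ b)) := dotProduct_comm _ _
      _ = Matrix.det (![R *ᵥ c, R *ᵥ a, R *ᵥ b] : Matrix (Fin 3) (Fin 3) ℝ) :=
          triple_product_eq_det _ _ _
      _ = Matrix.det (Matrix.of ![c, a, b] * Rᵀ) := by rw [hmat]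
      _ = Matrix.det (![c, a, b] : Matrix (Fin 3) (Fin 3) ℝ) := by
          rw [Matrix.det_mul, Matrix.det_transpose, hdet, mul_one]; rfl
      _ = c ⬝ᵥ (a ⨯₃ b) := (triple_product_eq_det _ _ _).symm
      _ = (a ⨯₃ b) ⬝ᵥ c := dotProduct_comm _ _
      _ = (R *ᵥ (a ⨯₃ b)) ⬝ᵥ (R *ᵥ c) := (orth_dot hR _ _).symm
  funext i
  simpa using key (Pi.single i 1)

/-- Derivative of invariance along the curve `t ↦ cos t • C1 + sin t • C2 + C3`. -/
lemma key_zero (U : Matrix (Fin 3) (Fin 3) ℝ × (Fin 3 → ℝ) → ℝ)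
    (hU : Differentiable ℝ U)
    (R : Matrix (Fin 3) (Fin 3) ℝ) (x : Fin 3 → ℝ)
    (C1 C2 C3 : Matrix (Fin 3) (Fin 3) ℝ)
    (hinv : ∀ Q : Matrix (Fin 3) (Fin 3) ℝ, Qᵀ * Q = 1 → Q.det = 1 →
      ∀ (A : Matrix (Fin 3) (Fin 3) ℝ) (y : Fin 3 → ℝ), U (Q * A, Q *ᵥ y) = U (A, y))
    (hQ1 : C1 + C3 = 1)
    (horth : ∀ t : ℝ, (Real.cos t • C1 + Real.sin t • C2 + C3)ᵀ *
      (Real.cos t • C1 + Real.sin t • C2 + C3) = 1)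
    (hdetQ : ∀ t : ℝ, (Real.cos t • C1 + Real.sin t • C2 + C3).det = 1) :
    fderiv ℝ U (R, x) (C2 * R, C2 *ᵥ x) = 0 := by
  have hconst : ∀ t : ℝ, U ((Real.cos t • C1 + Real.sin t • C2 + C3) * R,
      (Real.cos t • C1 + Real.sin t • C2 + C3) *ᵥ x) = U (R, x) :=
    fun t => hinv _ (horth t) (hdetQ t) R x
  set Q : ℝ → Matrix (Fin 3) (Fin 3) ℝ :=
    fun t => Real.cos t • C1 + Real.sin t • C2 + C3 with hQ
  have hQ0 : Q 0 = 1 := by simp [hQ, hQ1]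
  have hQd : HasDerivAt Q C2 0 := by
    have h1 : HasDerivAt (fun t : ℝ => Real.cos t • C1) ((-Real.sin 0) • C1) 0 :=
      (Real.hasDerivAt_cos 0).smul_const C1
    have h2 : HasDerivAt (fun t : ℝ => Real.sin t • C2) ((Real.cos 0) • C2) 0 :=
      (Real.hasDerivAt_sin 0).smul_const C2
    have := (h1.add h2).add_const C3
    have e : (-Real.sin 0) • C1 + Real.cos 0 • C2 = C2 := by simp
    rw [e] at this
    exact this
  let Lmap : Matrix (Fin 3) (Fin 3) ℝ →ₗ[ℝ] (Matrix (Fin 3) (Fin 3) ℝ × (Fin 3 → ℝ)) :=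
    { toFun := fun A => (A * R, A *ᵥ x)
      map_add' := by intro A B; simp [add_mul, Matrix.add_mulVec]
      map_smul' := by intro c A; simp [Matrix.smul_mul, Matrix.smul_mulVec] }
  let L := LinearMap.toContinuousLinearMap Lmap
  have hL : ∀ A, L A = (A * R, A *ᵥ x) := fun A => rfl
  have hcurve : HasDerivAt (fun t => L (Q t)) (L C2) 0 :=
    L.hasFDerivAt.comp_hasDerivAt 0 hQd
  have hcomp : HasDerivAt (fun t => U (L (Q t)))
      (fderiv ℝ U (L (Q 0)) (L C2)) 0 :=
    ((hU (L (Q 0))).hasFDerivAt).comp_hasDerivAt 0 hcurve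
  have hconst' : HasDerivAt (fun t => U (L (Q t))) 0 0 := by
    have : (fun t => U (L (Q t))) = fun _ => U (R, x) := by
      funext t
      rw [hL]
      exact hconst t
    rw [this]
    exact hasDerivAt_const _ _
  have h0 := (hconst'.unique hcomp).symm
  rw [hL, hQ0] at h0
  rw [hL] at h0
  simpa using h0

set_option maxHeartbeats 2000000 in
/-- For a differentiable potential `U(A,x)` invariant under simultaneous
rotations, with `G(A,x)` the matrix of partial derivatives of `U` in `A` and `g(A,x)` the
gradient of `U` in `x`, for every `R ∈ SO(3)` and `x`, the matrix `G(R,x)ᵀR − RᵀG(R,x)` is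
skew-symmetric and the vector `M(R,x)` with `S_{M(R,x)} = G(R,x)ᵀR − RᵀG(R,x)` satisfies
`R·M(R,x) = x × g(R,x)`. -/
theorem invariant_potential_torque_identity
    (U : Matrix (Fin 3) (Fin 3) ℝ × (Fin 3 → ℝ) → ℝ)
    (hU : Differentiable ℝ U)
    (hinv : ∀ Q : Matrix (Fin 3) (Fin 3) ℝ, Qᵀ * Q = 1 → Q.det = 1 →
      ∀ (A : Matrix (Fin 3) (Fin 3) ℝ) (x : Fin 3 → ℝ), U (Q * A, Q *ᵥ x) = U (A, x))
    (G : Matrix (Fin 3) (Fin 3) ℝ → (Fin 3 → ℝ) → Matrix (Fin 3) (Fin 3) ℝ)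
    (hG : ∀ (A : Matrix (Fin 3) (Fin 3) ℝ) (x : Fin 3 → ℝ) (H : Matrix (Fin 3) (Fin 3) ℝ),
      fderiv ℝ U (A, x) (H, 0) = ∑ i : Fin 3, ∑ j : Fin 3, G A x i j * H i j)
    (g : Matrix (Fin 3) (Fin 3) ℝ → (Fin 3 → ℝ) → (Fin 3 → ℝ))
    (hg : ∀ (A : Matrix (Fin 3) (Fin 3) ℝ) (x : Fin 3 → ℝ) (w : Fin 3 → ℝ),
      fderiv ℝ U (A, x) (0, w) = g A x ⬝ᵥ w) :
    ∀ (R : Matrix (Fin 3) (Fin 3) ℝ) (x : Fin 3 → ℝ), Rᵀ * R = 1 → R.det = 1 →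
      ((G R x)ᵀ * R - Rᵀ * G R x)ᵀ = -((G R x)ᵀ * R - Rᵀ * G R x) ∧
      ∀ M : Fin 3 → ℝ, hat M = (G R x)ᵀ * R - Rᵀ * G R x →
        R *ᵥ M = x ⨯₃ g R x := by
  intro R x hRtR hdet
  have hRRt : R * Rᵀ = 1 := mul_eq_one_comm.mp hRtR
  constructor
  · rw [Matrix.transpose_sub, Matrix.transpose_mul, Matrix.transpose_mul,
      Matrix.transpose_transpose, Matrix.transpose_transpose]
    exact (neg_sub _ _).symm
  intro M hM
  -- split the derivative
  have split : ∀ (H : Matrix (Fin 3) (Fin 3) ℝ) (w : Fin 3 → ℝ),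
      fderiv ℝ U (R, x) (H, w)
        = (∑ i : Fin 3, ∑ j : Fin 3, G R x i j * H i j) + g R x ⬝ᵥ w := by
    intro H w
    have h : ((H, w) : Matrix (Fin 3) (Fin 3) ℝ × (Fin 3 → ℝ)) = (H, 0) + (0, w) := by simp
    rw [h, map_add, hG, hg]
  -- the three rotation curves
  have hk0 := key_zero U hU R x !![0,0,0;0,1,0;0,0,1] !![0,0,0;0,0,-1;0,1,0] !![1,0,0;0,0,0;0,0,0] hinv
    (by ext i j; fin_cases i <;> fin_cases j <;>
      simp [Matrix.one_apply, Matrix.vecHead, Matrix.vecTail])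
    (by
      intro t
      ext i j
      fin_cases i <;> fin_cases j <;>
        simp [Matrix.mul_apply, Fin.sum_univ_three, Matrix.one_apply, Matrix.transpose_apply,
          Matrix.vecHead, Matrix.vecTail] <;>
        nlinarith [Real.sin_sq_add_cos_sq t])
    (by
      intro t
      rw [Matrix.det_fin_three]
      simp [Matrix.vecHead, Matrix.vecTail]
      nlinarith [Real.sin_sq_add_cos_sq t])
  have hk1 := key_zero U hU R x !![1,0,0;0,0,0;0,0,1] !![0,0,1;0,0,0;-1,0,0] !![0,0,0;0,1,0;0,0,0] hinv
    (by ext i j; fin_cases i <;> fin_cases j <;>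
      simp [Matrix.one_apply, Matrix.vecHead, Matrix.vecTail])
    (by
      intro t
      ext i j
      fin_cases i <;> fin_cases j <;>
        simp [Matrix.mul_apply, Fin.sum_univ_three, Matrix.one_apply, Matrix.transpose_apply,
          Matrix.vecHead, Matrix.vecTail] <;>
        nlinarith [Real.sin_sq_add_cos_sq t])
    (by
      intro t
      rw [Matrix.det_fin_three]
      simp [Matrix.vecHead, Matrix.vecTail]
      nlinarith [Real.sin_sq_add_cos_sq t])
  have hk2 := key_zero U hU R x !![1,0,0;0,1,0;0,0,0] !![0,-1,0;1,0,0;0,0,0] !![0,0,0;0,0,0;0,0,1] hinv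
    (by ext i j; fin_cases i <;> fin_cases j <;>
      simp [Matrix.one_apply, Matrix.vecHead, Matrix.vecTail])
    (by
      intro t
      ext i j
      fin_cases i <;> fin_cases j <;>
        simp [Matrix.mul_apply, Fin.sum_univ_three, Matrix.one_apply, Matrix.transpose_apply,
          Matrix.vecHead, Matrix.vecTail] <;>
        nlinarith [Real.sin_sq_add_cos_sq t])
    (by
      intro t
      rw [Matrix.det_fin_three]
      simp [Matrix.vecHead, Matrix.vecTail]
      nlinarith [Real.sin_sq_add_cos_sq t])
  rw [split] at hk0 hk1 hk2
  simp [Matrix.mul_apply, Matrix.mulVec, dotProduct, Fin.sum_univ_three,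
    Matrix.vecHead, Matrix.vecTail] at hk0 hk1 hk2
  -- the spatial identity
  have hA : R * (G R x)ᵀ - G R x * Rᵀ = hat (x ⨯₃ g R x) := by
    ext i j
    fin_cases i <;> fin_cases j <;>
      simp [hat, Matrix.mul_apply, Fin.sum_univ_three, cross_apply, Matrix.transpose_apply,
        Matrix.sub_apply] <;>
      linarith [hk0, hk1, hk2]
  have h2 : R * hat M * Rᵀ = hat (x ⨯₃ g R x) := by
    rw [hM]
    have e : R * ((G R x)ᵀ * R - Rᵀ * G R x) * Rᵀ
        = R * (G R x)ᵀ * (R * Rᵀ) - (R * Rᵀ) * (G R x * Rᵀ) := by noncomm_ring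
    rw [e, hRRt, mul_one, one_mul, ← hA]
  have h3 : ∀ u, R *ᵥ (M ⨯₃ u) = (x ⨯₃ g R x) ⨯₃ (R *ᵥ u) := by
    intro u
    calc R *ᵥ (M ⨯₃ u) = R *ᵥ (hat M *ᵥ u) := by rw [hat_mulVec]
      _ = (R * hat M) *ᵥ u := by rw [Matrix.mulVec_mulVec]
      _ = ((R * hat M * Rᵀ) * R) *ᵥ u := by
            rw [mul_assoc (R * hat M) Rᵀ R, hRtR, mul_one]
      _ = (hat (x ⨯₃ g R x) * R) *ᵥ u := by rw [h2]
      _ = hat (x ⨯₃ g R x) *ᵥ (R *ᵥ u) := by rw [← Matrix.mulVec_mulVec]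
      _ = (x ⨯₃ g R x) ⨯₃ (R *ᵥ u) := hat_mulVec _ _
  apply cross_right_cancel
  intro w
  have hw : R *ᵥ (Rᵀ *ᵥ w) = w := by rw [Matrix.mulVec_mulVec, hRRt, Matrix.one_mulVec]
  calc (R *ᵥ M) ⨯₃ w = (R *ᵥ M) ⨯₃ (R *ᵥ (Rᵀ *ᵥ w)) := by rw [hw]
    _ = R *ᵥ (M ⨯₃ (Rᵀ *ᵥ w)) := so3_cross hRtR hdet M _
    _ = (x ⨯₃ g R x) ⨯₃ (R *ᵥ (Rᵀ *ᵥ w)) := h3 _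
    _ = (x ⨯₃ g R x) ⨯₃ w := by rw [hw]
end

section
/- Consider one step of the Lie group variational integrator on SE(3): let h, m ∈ ℝ, let R_k ∈ ℝ^{3×3}, F_k ∈ SO(3), x_k, v_k, Π_k ∈ ℝ³ (Π_k representing JΩ_k), and suppose x_{k+1} = x_k + h v_k, R_{k+1} = R_k F_k, Π_{k+1} = F_kᵀ Π_k + h M_{k+1}, and m v_{k+1} = m v_k − h f_{k+1}, where M_{k+1}, f_{k+1} ∈ ℝ³ satisfy the torque identity R_{k+1} M_{k+1} = x_{k+1} × f_{k+1}. Then the total spatial angular momentum is exactly preserved over the step: R_{k+1} Π_{k+1} + m·x_{k+1} × v_{k+1} = R_k Π_k + m·x_k × v_k. -/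
open Matrix

/-- One step of the Lie group variational integrator on SE(3) exactly
preserves the total spatial angular momentum `R Π + m·x × v`, provided the torque
identity `R_{k+1} M_{k+1} = x_{k+1} × f_{k+1}` holds. -/
theorem se3_step_angular_momentum
    (h m : ℝ)
    (Rk Rk1 Fk : Matrix (Fin 3) (Fin 3) ℝ)
    (xk xk1 vk vk1 Pmk Pmk1 Mk1 fk1 : Fin 3 → ℝ)
    (hFk : Fkᵀ * Fk = 1) (hFkdet : Fk.det = 1)
    (hx : xk1 = xk + h • vk)
    (hR : Rk1 = Rk * Fk)
    (hPm : Pmk1 = Fkᵀ *ᵥ Pmk + h • Mk1)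
    (hv : m • vk1 = m • vk - h • fk1)
    (htorque : Rk1 *ᵥ Mk1 = xk1 ⨯₃ fk1) :
    Rk1 *ᵥ Pmk1 + m • (xk1 ⨯₃ vk1) = Rk *ᵥ Pmk + m • (xk ⨯₃ vk) := by
  have hFk' : Fk * Fkᵀ = 1 := mul_eq_one_comm.mp hFk
  have h1 : Rk1 *ᵥ (Fkᵀ *ᵥ Pmk) = Rk *ᵥ Pmk := by
    rw [hR, mulVec_mulVec, Matrix.mul_assoc, hFk', Matrix.mul_one]
  have h2 : m • (xk1 ⨯₃ vk1) = xk1 ⨯₃ (m • vk1) := (LinearMap.map_smul _ m vk1).symm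
  have h3 : xk1 ⨯₃ (m • vk - h • fk1) = xk1 ⨯₃ (m • vk) - h • (xk1 ⨯₃ fk1) := by
    rw [map_sub, LinearMap.map_smul, LinearMap.map_smul]
  have h4 : xk1 ⨯₃ (m • vk) = m • (xk ⨯₃ vk) := by
    rw [hx]
    have e1 : (xk + h • vk) ⨯₃ (m • vk) = xk ⨯₃ (m • vk) + (h • vk) ⨯₃ (m • vk) := by
      rw [map_add]; rfl
    have e2 : (h • vk) ⨯₃ (m • vk) = (h * m) • (vk ⨯₃ vk) := by
      rw [LinearMap.map_smul, LinearMap.map_smul₂, smul_smul, mul_comm m h]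
    rw [e1, e2, cross_self, smul_zero, add_zero, LinearMap.map_smul]
  rw [hPm, mulVec_add, mulVec_smul, htorque, h1, h2, hv, h3, h4]
  abel
end

section
/- Consider the free (uncontrolled) discrete dynamics of a dumbbell spacecraft in a central gravity field: let h, m, k ∈ ℝ with k = G·Mc·m/2, ρ¹, ρ² ∈ ℝ³, R_j ∈ SO(3), F_j ∈ SO(3), and x_j, v_j, Π_j ∈ ℝ³ satisfy, for each step j: x_{j+1} = x_j + h v_j; R_{j+1} = R_j F_j; Π_{j+1} = F_jᵀ Π_j + h M_{j+1}; and m v_{j+1} = m v_j − h f_{j+1}, where, writing z^q = x_{j+1} + R_{j+1}ρ^q and assuming z^q ≠ 0 for q = 1,2, the force gradient and moment are f_{j+1} = k·Σ_{q=1,2} z^q/‖z^q‖³ and M_{j+1} = k·Σ_{q=1,2} (R_{j+1}ᵀ z^q/‖z^q‖³) × ρ^q. Then the total spatial angular momentum R_j Π_j + m·x_j × v_j is the same for all j. -/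
open Matrix

/-- The Euclidean norm of a vector in `ℝ³`. -/
noncomputable def enorm3 (v : Fin 3 → ℝ) : ℝ := Real.sqrt (v ⬝ᵥ v)

lemma cross_mulVec (A : Matrix (Fin 3) (Fin 3) ℝ) (a b : Fin 3 → ℝ) :
    (A *ᵥ a) ⨯₃ (A *ᵥ b) = (A.adjugate)ᵀ *ᵥ (a ⨯₃ b) := by
  funext i
  fin_cases i <;>
    simp [cross_apply, Matrix.mulVec, dotProduct, Matrix.adjugate_fin_three,
      Fin.sum_univ_three] <;> ring

lemma rot_cross (Rm : Matrix (Fin 3) (Fin 3) ℝ) (hR : Rmᵀ * Rm = 1) (hdet : Rm.det = 1)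
    (a b : Fin 3 → ℝ) : (Rm *ᵥ a) ⨯₃ (Rm *ᵥ b) = Rm *ᵥ (a ⨯₃ b) := by
  have hR' : Rm * Rmᵀ = 1 := mul_eq_one_comm.mp hR
  have hadj : Rm.adjugate = Rmᵀ := by
    calc Rm.adjugate = Rm.adjugate * (Rm * Rmᵀ) := by rw [hR', mul_one]
    _ = (Rm.adjugate * Rm) * Rmᵀ := by rw [mul_assoc]
    _ = Rmᵀ := by rw [Matrix.adjugate_mul, hdet, one_smul, one_mul]
  rw [cross_mulVec, hadj, transpose_transpose]

lemma cross_alg (c : ℝ) (z xn : Fin 3 → ℝ) :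
    (c • z) ⨯₃ (z - xn) = xn ⨯₃ (c • z) := by
  funext i
  fin_cases i <;>
    simp only [cross_apply, Pi.smul_apply, Pi.sub_apply, smul_eq_mul,
      Matrix.cons_val_zero, Matrix.cons_val_one, Matrix.head_cons,
      Matrix.cons_val_two, Matrix.tail_cons] <;> ring

lemma cross_shift (h : ℝ) (a b : Fin 3 → ℝ) :
    (a + h • b) ⨯₃ b = a ⨯₃ b := by
  funext i
  fin_cases i <;>
    simp only [cross_apply, Pi.smul_apply, Pi.add_apply, smul_eq_mul,
      Matrix.cons_val_zero, Matrix.cons_val_one, Matrix.head_cons,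
      Matrix.cons_val_two, Matrix.tail_cons] <;> ring

lemma term_eq (Rm : Matrix (Fin 3) (Fin 3) ℝ) (hR : Rmᵀ * Rm = 1) (hdet : Rm.det = 1)
    (xn ρq : Fin 3 → ℝ) (c : ℝ) :
    Rm *ᵥ ((c • (Rmᵀ *ᵥ (xn + Rm *ᵥ ρq))) ⨯₃ ρq) = xn ⨯₃ (c • (xn + Rm *ᵥ ρq)) := by
  have hR' : Rm * Rmᵀ = 1 := mul_eq_one_comm.mp hR
  rw [← rot_cross Rm hR hdet, Matrix.mulVec_smul, Matrix.mulVec_mulVec, hR',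
    Matrix.one_mulVec]
  set z := xn + Rm *ᵥ ρq with hzd
  rw [show Rm *ᵥ ρq = z - xn from by rw [hzd]; abel, cross_alg]

/-- The free (uncontrolled) Lie group variational integrator for the
dumbbell spacecraft in a central gravity field conserves the total spatial angular
momentum `R_j Π_j + m·x_j × v_j`. -/
theorem dumbbell_angular_momentum_conserved
    (h m k : ℝ) (ρ : Fin 2 → Fin 3 → ℝ)
    (R F : ℕ → Matrix (Fin 3) (Fin 3) ℝ) (x v Pm : ℕ → Fin 3 → ℝ)
    (hR : ∀ j, (R j)ᵀ * R j = 1) (hRdet : ∀ j, (R j).det = 1)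
    (hF : ∀ j, (F j)ᵀ * F j = 1) (hFdet : ∀ j, (F j).det = 1)
    (hz : ∀ j (q : Fin 2), x (j + 1) + R (j + 1) *ᵥ ρ q ≠ 0)
    (hxup : ∀ j, x (j + 1) = x j + h • v j)
    (hRup : ∀ j, R (j + 1) = R j * F j)
    (hPup : ∀ j, Pm (j + 1) = (F j)ᵀ *ᵥ Pm j +
      h • (k • ∑ q : Fin 2,
        ((enorm3 (x (j + 1) + R (j + 1) *ᵥ ρ q) ^ 3)⁻¹ •
          ((R (j + 1))ᵀ *ᵥ (x (j + 1) + R (j + 1) *ᵥ ρ q))) ⨯₃ ρ q))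
    (hvup : ∀ j, m • v (j + 1) = m • v j -
      h • (k • ∑ q : Fin 2,
        (enorm3 (x (j + 1) + R (j + 1) *ᵥ ρ q) ^ 3)⁻¹ •
          (x (j + 1) + R (j + 1) *ᵥ ρ q))) :
    ∀ j, R j *ᵥ Pm j + m • (x j ⨯₃ v j) = R 0 *ᵥ Pm 0 + m • (x 0 ⨯₃ v 0) := by
  have step : ∀ j, R (j+1) *ᵥ Pm (j+1) + m • (x (j+1) ⨯₃ v (j+1))
      = R j *ᵥ Pm j + m • (x j ⨯₃ v j) := by
    intro j
    have hFF : F j * (F j)ᵀ = 1 := mul_eq_one_comm.mp (hF j)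
    have e1 : R (j+1) *ᵥ Pm (j+1) = R j *ᵥ Pm j + h • (k •
        (x (j+1) ⨯₃ ((enorm3 (x (j+1) + R (j+1) *ᵥ ρ 0) ^ 3)⁻¹ • (x (j+1) + R (j+1) *ᵥ ρ 0)) +
         x (j+1) ⨯₃ ((enorm3 (x (j+1) + R (j+1) *ᵥ ρ 1) ^ 3)⁻¹ • (x (j+1) + R (j+1) *ᵥ ρ 1)))) := by
      rw [hPup j, Matrix.mulVec_add]
      congr 1
      · rw [hRup j, Matrix.mulVec_mulVec, mul_assoc, hFF, mul_one]
      · rw [Matrix.mulVec_smul, Matrix.mulVec_smul, Fin.sum_univ_two,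
          Matrix.mulVec_add, term_eq _ (hR (j+1)) (hRdet (j+1)),
          term_eq _ (hR (j+1)) (hRdet (j+1))]
    have e2 : m • (x (j+1) ⨯₃ v (j+1)) = m • (x j ⨯₃ v j) - h • (k •
        (x (j+1) ⨯₃ ((enorm3 (x (j+1) + R (j+1) *ᵥ ρ 0) ^ 3)⁻¹ • (x (j+1) + R (j+1) *ᵥ ρ 0)) +
         x (j+1) ⨯₃ ((enorm3 (x (j+1) + R (j+1) *ᵥ ρ 1) ^ 3)⁻¹ • (x (j+1) + R (j+1) *ᵥ ρ 1)))) := by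
      have hm : m • (x (j+1) ⨯₃ v (j+1)) = x (j+1) ⨯₃ (m • v (j+1)) := by
        rw [LinearMap.map_smul]
      rw [hm, hvup j, Fin.sum_univ_two, map_sub, LinearMap.map_smul,
        LinearMap.map_smul, LinearMap.map_smul, map_add, hxup j, cross_shift]
    rw [e1, e2]
    abel
  intro j
  induction j with
  | zero => rfl
  | succ n ih => rw [step n]; exact ih
end

section
/- Consider the discrete dynamics of two rigid bodies connected by a ball joint with an internal control moment: let m₁, m₂ > 0, α = m₁/(m₁+m₂), β = m₂/(m₁+m₂), h ≠ 0, and d₁, d₂ ∈ ℝ³. Let sequences R_{1,k}, R_{2,k} ∈ SO(3), F_{1,k}, F_{2,k} ∈ SO(3), p_{1,k}, p_{2,k} ∈ ℝ³, and controls u_k ∈ ℝ³ satisfy, for all k: R_{i,k+1} = R_{i,k}F_{i,k} for i = 1,2; p_{1,k+1} = F_{1,k}ᵀ(p_{1,k} − b_{1,k}) + h·R_{1,k+1}ᵀ u_{k+1}; and p_{2,k+1} = F_{2,k}ᵀ(p_{2,k} − b_{2,k}) − h·R_{2,k+1}ᵀ u_{k+1}; where c_k = −α·R_{1,k}(F_{1,k}−I)d₁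 − β·R_{2,k}(F_{2,k}−I)d₂, B_{i,k} = (m_i/h)·(F_{i,k}−I)d_i · c_kᵀ · R_{i,k}, and b_{i,k} ∈ ℝ³ is the vector with S_{b_{i,k}} = B_{i,k} − B_{i,k}ᵀ. Then the total spatial angular momentum R_{1,k}p_{1,k} + R_{2,k}p_{2,k} is the same for all k; in particular, if it vanishes initially, it vanishes along the entire controlled trajectory. -/
open Matrix

lemma rot_cross_s12 (Q : Matrix (Fin 3) (Fin 3) ℝ) (hQ : Qᵀ * Q = 1) (hdet : Q.det = 1)
    (x y : Fin 3 → ℝ) : Q *ᵥ (x ⨯₃ y) = (Q *ᵥ x) ⨯₃ (Q *ᵥ y) := by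
  have hadj : Q.adjugate = Qᵀ := by
    have h1 : Q * Q.adjugate = 1 := by rw [mul_adjugate, hdet, one_smul]
    calc Q.adjugate = (Qᵀ * Q) * Q.adjugate := by rw [hQ, one_mul]
    _ = Qᵀ * (Q * Q.adjugate) := by rw [mul_assoc]
    _ = Qᵀ := by rw [h1, mul_one]
  have key : (Q *ᵥ x) ⨯₃ (Q *ᵥ y) = (Q.adjugate)ᵀ *ᵥ (x ⨯₃ y) := by
    rw [adjugate_fin_three]
    funext i
    fin_cases i <;>
      simp [cross_apply, mulVec, dotProduct, Fin.sum_univ_three, transpose] <;> ring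
  rw [key, hadj, transpose_transpose]

lemma hat_inj {x y : Fin 3 → ℝ} (hxy : hat x = hat y) : x = y := by
  funext i
  fin_cases i
  · have := congrFun (congrFun hxy 2) 1; simpa [hat] using this
  · have := congrFun (congrFun hxy 0) 2; simpa [hat] using this
  · have := congrFun (congrFun hxy 1) 0; simpa [hat] using this

lemma hat_smul (r : ℝ) (x : Fin 3 → ℝ) : hat (r • x) = r • hat x := by
  ext i j; fin_cases i <;> fin_cases j <;> simp [hat] <;> ring

lemma vecMulVec_sub (a w : Fin 3 → ℝ) :
    vecMulVec a w - (vecMulVec a w)ᵀ = hat (w ⨯₃ a) := by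
  ext i j; fin_cases i <;> fin_cases j <;>
    simp [hat, vecMulVec, cross_apply, transpose] <;> ring

/-- The reduced Lie group variational integrator for two rigid bodies
connected by a ball joint, with internal control moment `u`, conserves the total spatial
angular momentum `R_{1,k}p_{1,k} + R_{2,k}p_{2,k}`; in particular if it vanishes initially
it vanishes along the entire controlled trajectory. -/
theorem connected_bodies_momentum_conserved
    (m₁ m₂ : ℝ) (hm₁ : 0 < m₁) (hm₂ : 0 < m₂)
    (α β : ℝ) (hα : α = m₁ / (m₁ + m₂)) (hβ : β = m₂ / (m₁ + m₂))
    (h : ℝ) (hh : h ≠ 0) (d₁ d₂ : Fin 3 → ℝ)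
    (R₁ R₂ F₁ F₂ : ℕ → Matrix (Fin 3) (Fin 3) ℝ)
    (p₁ p₂ u : ℕ → Fin 3 → ℝ)
    (hR₁ : ∀ k, (R₁ k)ᵀ * R₁ k = 1) (hR₁det : ∀ k, (R₁ k).det = 1)
    (hR₂ : ∀ k, (R₂ k)ᵀ * R₂ k = 1) (hR₂det : ∀ k, (R₂ k).det = 1)
    (hF₁ : ∀ k, (F₁ k)ᵀ * F₁ k = 1) (hF₁det : ∀ k, (F₁ k).det = 1)
    (hF₂ : ∀ k, (F₂ k)ᵀ * F₂ k = 1) (hF₂det : ∀ k, (F₂ k).det = 1)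
    (c : ℕ → Fin 3 → ℝ)
    (hc : ∀ k, c k = -(α • (R₁ k *ᵥ ((F₁ k - 1) *ᵥ d₁)))
      - β • (R₂ k *ᵥ ((F₂ k - 1) *ᵥ d₂)))
    (B₁ B₂ : ℕ → Matrix (Fin 3) (Fin 3) ℝ)
    (hB₁ : ∀ k, B₁ k = (m₁ / h) • vecMulVec ((F₁ k - 1) *ᵥ d₁) ((R₁ k)ᵀ *ᵥ c k))
    (hB₂ : ∀ k, B₂ k = (m₂ / h) • vecMulVec ((F₂ k - 1) *ᵥ d₂) ((R₂ k)ᵀ *ᵥ c k))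
    (b₁ b₂ : ℕ → Fin 3 → ℝ)
    (hb₁ : ∀ k, hat (b₁ k) = B₁ k - (B₁ k)ᵀ)
    (hb₂ : ∀ k, hat (b₂ k) = B₂ k - (B₂ k)ᵀ)
    (hR₁up : ∀ k, R₁ (k + 1) = R₁ k * F₁ k)
    (hR₂up : ∀ k, R₂ (k + 1) = R₂ k * F₂ k)
    (hp₁up : ∀ k, p₁ (k + 1) = (F₁ k)ᵀ *ᵥ (p₁ k - b₁ k) + h • ((R₁ (k + 1))ᵀ *ᵥ u (k + 1)))
    (hp₂up : ∀ k, p₂ (k + 1) = (F₂ k)ᵀ *ᵥ (p₂ k - b₂ k) - h • ((R₂ (k + 1))ᵀ *ᵥ u (k + 1))) :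
    (∀ k, R₁ k *ᵥ p₁ k + R₂ k *ᵥ p₂ k = R₁ 0 *ᵥ p₁ 0 + R₂ 0 *ᵥ p₂ 0) ∧
    (R₁ 0 *ᵥ p₁ 0 + R₂ 0 *ᵥ p₂ 0 = 0 → ∀ k, R₁ k *ᵥ p₁ k + R₂ k *ᵥ p₂ k = 0) := by
  have hm : m₁ + m₂ ≠ 0 := by positivity
  -- formulas for b₁, b₂
  have hb₁' : ∀ k, b₁ k
      = (m₁ / h) • (((R₁ k)ᵀ *ᵥ c k) ⨯₃ ((F₁ k - 1) *ᵥ d₁)) := by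
    intro k
    apply hat_inj
    rw [hb₁ k, hB₁ k, hat_smul, transpose_smul, ← smul_sub, vecMulVec_sub]
  have hb₂' : ∀ k, b₂ k
      = (m₂ / h) • (((R₂ k)ᵀ *ᵥ c k) ⨯₃ ((F₂ k - 1) *ᵥ d₂)) := by
    intro k
    apply hat_inj
    rw [hb₂ k, hB₂ k, hat_smul, transpose_smul, ← smul_sub, vecMulVec_sub]
  -- R b₁ + R b₂ = 0
  have hRRT₁ : ∀ k, R₁ k * (R₁ k)ᵀ = 1 := fun k => mul_eq_one_comm.mp (hR₁ k)
  have hRRT₂ : ∀ k, R₂ k * (R₂ k)ᵀ = 1 := fun k => mul_eq_one_comm.mp (hR₂ k)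
  have hkey : ∀ k, R₁ k *ᵥ b₁ k + R₂ k *ᵥ b₂ k = 0 := by
    intro k
    set v₁ := R₁ k *ᵥ ((F₁ k - 1) *ᵥ d₁) with hv₁
    set v₂ := R₂ k *ᵥ ((F₂ k - 1) *ᵥ d₂) with hv₂
    have h1 : R₁ k *ᵥ b₁ k = (m₁ / h) • (c k ⨯₃ v₁) := by
      rw [hb₁' k, mulVec_smul, rot_cross_s12 _ (hR₁ k) (hR₁det k),
        mulVec_mulVec, hRRT₁ k, one_mulVec]
    have h2 : R₂ k *ᵥ b₂ k = (m₂ / h) • (c k ⨯₃ v₂) := by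
      rw [hb₂' k, mulVec_smul, rot_cross_s12 _ (hR₂ k) (hR₂det k),
        mulVec_mulVec, hRRT₂ k, one_mulVec]
    have hα' : (m₁ + m₂) * α = m₁ := by rw [hα]; field_simp
    have hβ' : (m₁ + m₂) * β = m₂ := by rw [hβ]; field_simp
    have hsum : m₁ • v₁ + m₂ • v₂ = (-(m₁ + m₂)) • c k := by
      have hcc : (-(m₁ + m₂)) • c k = ((m₁ + m₂) * α) • v₁ + ((m₁ + m₂) * β) • v₂ := by
        rw [hc k]; module
      rw [hcc, hα', hβ']
    have hz : c k ⨯₃ (m₁ • v₁ + m₂ • v₂) = 0 := by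
      rw [hsum, LinearMap.map_smul, cross_self, smul_zero]
    rw [h1, h2]
    have hexp : c k ⨯₃ (m₁ • v₁ + m₂ • v₂)
        = m₁ • (c k ⨯₃ v₁) + m₂ • (c k ⨯₃ v₂) := by
      rw [LinearMap.map_add, LinearMap.map_smul, LinearMap.map_smul]
    rw [hexp] at hz
    have : (m₁ / h) • (c k ⨯₃ v₁) + (m₂ / h) • (c k ⨯₃ v₂)
        = (1 / h) • (m₁ • (c k ⨯₃ v₁) + m₂ • (c k ⨯₃ v₂)) := by
      rw [smul_add, smul_smul, smul_smul]; ring_nf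
    rw [this, hz, smul_zero]
  -- step
  have hstep : ∀ k, R₁ (k+1) *ᵥ p₁ (k+1) + R₂ (k+1) *ᵥ p₂ (k+1)
      = R₁ k *ᵥ p₁ k + R₂ k *ᵥ p₂ k := by
    intro k
    have e1 : R₁ (k+1) *ᵥ p₁ (k+1)
        = R₁ k *ᵥ (p₁ k - b₁ k) + h • u (k+1) := by
      rw [hp₁up k, mulVec_add, mulVec_smul, mulVec_mulVec, mulVec_mulVec,
        mul_eq_one_comm.mp (hR₁ (k+1)), one_mulVec, hR₁up k, mul_assoc,
        mul_eq_one_comm.mp (hF₁ k), mul_one]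
    have e2 : R₂ (k+1) *ᵥ p₂ (k+1)
        = R₂ k *ᵥ (p₂ k - b₂ k) - h • u (k+1) := by
      rw [hp₂up k, mulVec_sub, mulVec_smul, mulVec_mulVec, mulVec_mulVec,
        mul_eq_one_comm.mp (hR₂ (k+1)), one_mulVec, hR₂up k, mul_assoc,
        mul_eq_one_comm.mp (hF₂ k), mul_one]
    rw [e1, e2, mulVec_sub, mulVec_sub]
    have := hkey k
    abel_nf
    abel_nf at this ⊢
    linear_combination (norm := abel) -this
  have main : ∀ k, R₁ k *ᵥ p₁ k + R₂ k *ᵥ p₂ k = R₁ 0 *ᵥ p₁ 0 + R₂ 0 *ᵥ p₂ 0 := by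
    intro k
    induction k with
    | zero => rfl
    | succ n ih => rw [hstep n, ih]
  exact ⟨main, fun h0 k => by rw [main k, h0]⟩
end

section
/- Let h ≠ 0, M, m, g ∈ ℝ, d ∈ ℝ³, and let J_d be a symmetric 3×3 real matrix. Define the discrete Lagrangian of the 3D pendulum on a 2D cart by L_d(R_k, x_k, y_k, R_{k+1}, x_{k+1}, y_{k+1}) = (1/2h)(M+m)((x_{k+1}−x_k)² + (y_{k+1}−y_k)²) + (1/h)tr((I − R_kᵀR_{k+1})J_d) + (m/h)(x_{k+1}−x_k)·e₁ᵀ(R_{k+1}−R_k)d + (m/h)(y_{k+1}−y_k)·e₂ᵀ(R_{k+1}−R_k)d + (h/2)mg·e₃ᵀR_k d + (h/2)mg·e₃ᵀR_{k+1} d, for R_k, R_{k+1} ∈ ℝ^{3×3} and x_k, y_k, x_{k+1}, y_{k+1} ∈ ℝ. For θ ∈ ℝ, let Q_θ be the rotation about e₃ by angle θ (the matrix with rows (cos θ, −sin θ, 0), (sin θ, cos θ, 0), (0,0,1)), and let r_θ(x,y) = (x cos θ − y sin θ, x sin θ + y cos θ). Then L_d is invariant under the diagonal S¹ action: L_d(Q_θ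 R_k, r_θ(x_k,y_k), Q_θ R_{k+1}, r_θ(x_{k+1},y_{k+1})) = L_d(R_k, x_k, y_k, R_{k+1}, x_{k+1}, y_{k+1}) for every θ. -/
open Matrix

/-- Standard basis vectors of `ℝ³`. -/
def e₁ : Fin 3 → ℝ := ![1, 0, 0]
def e₂ : Fin 3 → ℝ := ![0, 1, 0]
def e₃ : Fin 3 → ℝ := ![0, 0, 1]

/-- The discrete Lagrangian of the 3D pendulum on a 2D cart. -/
noncomputable def Ld (h Mcart m g : ℝ) (d : Fin 3 → ℝ) (Jd : Matrix (Fin 3) (Fin 3) ℝ)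
    (Rk : Matrix (Fin 3) (Fin 3) ℝ) (xk yk : ℝ)
    (Rk1 : Matrix (Fin 3) (Fin 3) ℝ) (xk1 yk1 : ℝ) : ℝ :=
  (1 / (2 * h)) * (Mcart + m) * ((xk1 - xk) ^ 2 + (yk1 - yk) ^ 2)
    + (1 / h) * ((1 - Rkᵀ * Rk1) * Jd).trace
    + (m / h) * (xk1 - xk) * (e₁ ⬝ᵥ ((Rk1 - Rk) *ᵥ d))
    + (m / h) * (yk1 - yk) * (e₂ ⬝ᵥ ((Rk1 - Rk) *ᵥ d))
    + (h / 2) * m * g * (e₃ ⬝ᵥ (Rk *ᵥ d))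
    + (h / 2) * m * g * (e₃ ⬝ᵥ (Rk1 *ᵥ d))

/-- Rotation about `e₃` by angle `θ`. -/
noncomputable def Qrot (θ : ℝ) : Matrix (Fin 3) (Fin 3) ℝ :=
  !![Real.cos θ, -Real.sin θ, 0; Real.sin θ, Real.cos θ, 0; 0, 0, 1]

lemma Qrot_transpose (θ : ℝ) :
    (Qrot θ)ᵀ = !![Real.cos θ, Real.sin θ, 0; -Real.sin θ, Real.cos θ, 0; 0, 0, 1] := by
  ext i j
  fin_cases i <;> fin_cases j <;> simp [Qrot, Matrix.transpose_apply]

lemma QtQ (θ : ℝ) : (Qrot θ)ᵀ * Qrot θ = 1 := by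
  rw [Qrot_transpose]
  ext i j
  fin_cases i <;> fin_cases j <;>
    simp [Qrot, Matrix.mul_apply, Fin.sum_univ_three, Matrix.one_apply] <;>
    nlinarith [Real.sin_sq_add_cos_sq θ]

/-- The discrete Lagrangian of the 3D pendulum on a 2D cart is invariant
under the diagonal `S¹` action rotating the pendulum attitude and the cart position
simultaneously about the gravity direction. -/
theorem Ld_S1_invariant (h Mcart m g : ℝ) (hh : h ≠ 0) (d : Fin 3 → ℝ)
    (Jd : Matrix (Fin 3) (Fin 3) ℝ) (hJd : Jdᵀ = Jd) (θ : ℝ)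
    (Rk Rk1 : Matrix (Fin 3) (Fin 3) ℝ) (xk yk xk1 yk1 : ℝ) :
    Ld h Mcart m g d Jd
      (Qrot θ * Rk) (xk * Real.cos θ - yk * Real.sin θ) (xk * Real.sin θ + yk * Real.cos θ)
      (Qrot θ * Rk1) (xk1 * Real.cos θ - yk1 * Real.sin θ) (xk1 * Real.sin θ + yk1 * Real.cos θ)
      = Ld h Mcart m g d Jd Rk xk yk Rk1 xk1 yk1 := by
  unfold Ld
  have htr : (Qrot θ * Rk)ᵀ * (Qrot θ * Rk1) = Rkᵀ * Rk1 := by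
    rw [Matrix.transpose_mul, Matrix.mul_assoc, ← Matrix.mul_assoc (Qrot θ)ᵀ, QtQ,
      Matrix.one_mul]
  rw [htr]
  have hsub : (Qrot θ * Rk1 - Qrot θ * Rk) *ᵥ d = Qrot θ *ᵥ ((Rk1 - Rk) *ᵥ d) := by
    rw [← Matrix.mul_sub, ← Matrix.mulVec_mulVec]
  rw [hsub, ← Matrix.mulVec_mulVec d (Qrot θ) Rk, ← Matrix.mulVec_mulVec d (Qrot θ) Rk1]
  set w : Fin 3 → ℝ := (Rk1 - Rk) *ᵥ d with hw
  have h1 : ∀ v : Fin 3 → ℝ, e₁ ⬝ᵥ (Qrot θ *ᵥ v) = Real.cos θ * v 0 - Real.sin θ * v 1 := by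
    intro v; simp [e₁, Qrot, Matrix.mulVec, dotProduct, Fin.sum_univ_three]; ring
  have h2 : ∀ v : Fin 3 → ℝ, e₂ ⬝ᵥ (Qrot θ *ᵥ v) = Real.sin θ * v 0 + Real.cos θ * v 1 := by
    intro v; simp [e₂, Qrot, Matrix.mulVec, dotProduct, Fin.sum_univ_three]
  have h3 : ∀ v : Fin 3 → ℝ, e₃ ⬝ᵥ (Qrot θ *ᵥ v) = v 2 := by
    intro v; simp [e₃, Qrot, Matrix.mulVec, dotProduct, Fin.sum_univ_three]
  have he1 : e₁ ⬝ᵥ w = w 0 := by simp [e₁, dotProduct, Fin.sum_univ_three]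
  have he2 : e₂ ⬝ᵥ w = w 1 := by simp [e₂, dotProduct, Fin.sum_univ_three]
  have he3 : ∀ v : Fin 3 → ℝ, e₃ ⬝ᵥ v = v 2 := by
    intro v; simp [e₃, dotProduct, Fin.sum_univ_three]
  rw [h1, h2, h3, h3, he1, he2, he3, he3]
  linear_combination ((1 / (2 * h)) * (Mcart + m) * ((xk1 - xk) ^ 2 + (yk1 - yk) ^ 2)
    + (m / h) * ((xk1 - xk) * w 0 + (yk1 - yk) * w 1)) * Real.sin_sq_add_cos_sq θ
end
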